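/- Let $\phi\in C^3([0,\infty))$ with $\phi(0)=\phi'(0)=0$, and let $\bar u\in C^3([0,\infty))$ with $\bar u(0)=0$, $\bar u'(0)>0$, $\bar u(y)>0$ for $y>0$, and $\bar u, \bar u',\bar u'',\bar u'''$ bounded with $\bar u\geq m\min(y,1)$ for some $m>0$. Then $g:=\phi/\bar u$ extends to a function on $[0,\infty)$ with $g(0)=0$, and on any interval $[0,1]$, $\|g''\|_{L^2(0,1)}\leq C(\|\phi'''\|_{L^2(0,2)}+\|\phi''\|_{L^2(0,2)})$ with $C$ depending only on $m$ and the bounds on $\bar u$ and its derivatives. -/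

import Mathlib

open MeasureTheory Set

lemma cs2 {f g : ℝ → ℝ} {s : Set ℝ} (hs : MeasurableSet s)
    [IsFiniteMeasure (volume.restrict s)]
    (hf0 : ∀ x ∈ s, 0 ≤ f x) (hg0 : ∀ x ∈ s, 0 ≤ g x)
    (hfm : AEStronglyMeasurable f (volume.restrict s))
    (hgm : AEStronglyMeasurable g (volume.restrict s))
    {Cf Cg : ℝ} (hfb : ∀ x ∈ s, |f x| ≤ Cf) (hgb : ∀ x ∈ s, |g x| ≤ Cg) :
    ∫ x in s, f x * g x ≤
      Real.sqrt (∫ x in s, f x ^ 2) * Real.sqrt (∫ x in s, g x ^ 2) := by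
  have hpq : Real.HolderConjugate 2 2 := ⟨by norm_num, by norm_num, by norm_num⟩
  have hf : MemLp f (ENNReal.ofReal 2) (volume.restrict s) :=
    MemLp.of_bound hfm Cf <| (ae_restrict_iff' hs).2 <| Filter.Eventually.of_forall
      fun x hx => by simpa [Real.norm_eq_abs] using hfb x hx
  have hg : MemLp g (ENNReal.ofReal 2) (volume.restrict s) :=
    MemLp.of_bound hgm Cg <| (ae_restrict_iff' hs).2 <| Filter.Eventually.of_forall
      fun x hx => by simpa [Real.norm_eq_abs] using hgb x hx
  have := integral_mul_le_Lp_mul_Lq_of_nonneg hpq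
    ((ae_restrict_iff' hs).2 <| Filter.Eventually.of_forall hf0)
    ((ae_restrict_iff' hs).2 <| Filter.Eventually.of_forall hg0) hf hg
  calc ∫ x in s, f x * g x
      ≤ (∫ x in s, f x ^ (2:ℝ)) ^ (1/(2:ℝ)) * (∫ x in s, g x ^ (2:ℝ)) ^ (1/(2:ℝ)) := this
    _ = _ := by
        rw [Real.sqrt_eq_rpow, Real.sqrt_eq_rpow]
        norm_num [show ((2:ℝ)) = ((2:ℕ):ℝ) by norm_num, Real.rpow_natCast]

lemma integrableOn_of_bound {h : ℝ → ℝ} {s : Set ℝ} (hs : MeasurableSet s)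
    [IsFiniteMeasure (volume.restrict s)]
    (hm : AEStronglyMeasurable h (volume.restrict s)) {c : ℝ}
    (hb : ∀ x ∈ s, |h x| ≤ c) : IntegrableOn h s :=
  memLp_one_iff_integrable.mp <| MemLp.of_bound hm c <|
    (ae_restrict_iff' hs).2 <| Filter.Eventually.of_forall
      fun x hx => by simpa [Real.norm_eq_abs] using hb x hx

lemma hardy {f : ℝ → ℝ} (hf : Continuous f) (hf0 : ∀ x, 0 ≤ f x) :
    ∫ y in Ioo (0:ℝ) 1, ((∫ s in (0:ℝ)..y, f s) / y) ^ 2 ≤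
      4 * ∫ s in Ioo (0:ℝ) 1, f s ^ 2 := by
  set J : ℝ → ℝ := fun y => ∫ s in (0:ℝ)..y, f s with hJdef
  have hJd : ∀ y, HasDerivAt J (f y) y := fun y =>
    (hf.integral_hasStrictDerivAt 0 y).hasDerivAt
  have hJc : Continuous J := Differentiable.continuous fun y => (hJd y).differentiableAt
  obtain ⟨M, hM⟩ := isCompact_Icc.exists_bound_of_continuousOn
    (hf.continuousOn (s := Icc (0:ℝ) 1))
  have hM0 : 0 ≤ M := le_trans (norm_nonneg _) (hM 0 ⟨le_rfl, zero_le_one⟩)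
  have hJnn : ∀ y, 0 ≤ y → 0 ≤ J y := fun y hy =>
    intervalIntegral.integral_nonneg hy fun s _ => hf0 s
  have hJle : ∀ y, 0 ≤ y → y ≤ 1 → J y ≤ M * y := by
    intro y hy0 hy1
    have h : ‖∫ s in (0:ℝ)..y, f s‖ ≤ M * |y - 0| := by
      apply intervalIntegral.norm_integral_le_of_norm_le_const
      intro x hx
      rw [uIoc_of_le hy0] at hx
      exact hM x ⟨hx.1.le, hx.2.trans hy1⟩
    calc J y ≤ ‖J y‖ := le_abs_self _
      _ ≤ M * |y - 0| := h
      _ = M * y := by rw [sub_zero, abs_of_nonneg hy0]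
  set G : ℝ → ℝ := fun y => (J y / y) ^ 2 with hGdef
  have hGnn : ∀ y, 0 ≤ G y := fun y => sq_nonneg _
  have hGb : ∀ y ∈ Ioc (0:ℝ) 1, |G y| ≤ M ^ 2 := by
    intro y hy
    have h1 : J y / y ≤ M := by
      rw [div_le_iff₀ hy.1]; exact hJle y hy.1.le hy.2
    have h2 : 0 ≤ J y / y := div_nonneg (hJnn y hy.1.le) hy.1.le
    rw [abs_of_nonneg (hGnn y)]
    show (J y / y) ^ 2 ≤ M ^ 2
    nlinarith
  have hGint : IntegrableOn G (Ioc 0 1) :=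
    integrableOn_of_bound measurableSet_Ioc
      (((hJc.continuousOn.div continuousOn_id fun x hx => ne_of_gt hx.1).pow
        2).aestronglyMeasurable measurableSet_Ioc) hGb
  have hfsq_nn : (0:ℝ) ≤ ∫ s in Ioo (0:ℝ) 1, f s ^ 2 :=
    setIntegral_nonneg measurableSet_Ioo fun s _ => sq_nonneg _
  set X := ∫ y in Ioo (0:ℝ) 1, G y with hXdef
  set B := Real.sqrt (∫ s in Ioo (0:ℝ) 1, f s ^ 2) with hBdef
  have hXnn : 0 ≤ X := setIntegral_nonneg measurableSet_Ioo fun y _ => hGnn y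
  have hBnn : 0 ≤ B := Real.sqrt_nonneg _
  have hXIoc : X = ∫ y in Ioc (0:ℝ) 1, G y := integral_Ioc_eq_integral_Ioo.symm
  have hfsq_int : IntegrableOn (fun s => f s ^ 2) (Ioo 0 1) :=
    (((hf.pow 2).continuousOn).integrableOn_compact (isCompact_Icc
      (a := (0:ℝ)) (b := 1))).mono_set Ioo_subset_Icc_self
  have key : ∀ ε : ℝ, 0 < ε → ε < 1 → X ≤ 2 * Real.sqrt X * B + 2 * (M ^ 2 + 1) * ε := by
    intro ε hε0 hε1
    have hsplit : X = (∫ y in Ioc (0:ℝ) ε, G y) + ∫ y in Ioc ε 1, G y := by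
      rw [hXIoc, ← Ioc_union_Ioc_eq_Ioc hε0.le hε1.le]
      exact setIntegral_union (Ioc_disjoint_Ioc_of_le le_rfl) measurableSet_Ioc
        (hGint.mono_set (Ioc_subset_Ioc le_rfl hε1.le))
        (hGint.mono_set (Ioc_subset_Ioc hε0.le le_rfl))
    have h1 : (∫ y in Ioc (0:ℝ) ε, G y) ≤ ε * M ^ 2 := by
      have hmono : (∫ y in Ioc (0:ℝ) ε, G y) ≤ ∫ _ in Ioc (0:ℝ) ε, M ^ 2 := by
        apply setIntegral_mono_on (hGint.mono_set (Ioc_subset_Ioc le_rfl hε1.le))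
          (integrableOn_const (by simp [Real.volume_Ioc])) measurableSet_Ioc
        intro y hy
        exact (le_abs_self _).trans (hGb y (Ioc_subset_Ioc le_rfl hε1.le hy))
      rw [setIntegral_const, Real.volume_real_Ioc, sub_zero, max_eq_left hε0.le] at hmono
      simpa [ENNReal.toReal_ofReal hε0.le, smul_eq_mul] using hmono
    have hy0 : ∀ y ∈ uIcc ε 1, y ≠ 0 := by
      intro y hy
      rw [uIcc_of_le hε1.le] at hy
      exact ne_of_gt (lt_of_lt_of_le hε0 hy.1)
    have hderiv : ∀ y ∈ uIcc ε 1,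
        HasDerivAt (fun z => J z ^ 2 / z) (2 * (J y / y * f y) - G y) y := by
      intro y hy
      have hne := hy0 y hy
      have h := ((hJd y).fun_pow 2).fun_div (hasDerivAt_id' y) hne
      refine h.congr_deriv ?_
      simp only [hGdef]
      field_simp
      ring
    have hcont1 : ContinuousOn (fun y => 2 * (J y / y * f y)) (uIcc ε 1) :=
      continuousOn_const.mul
        ((hJc.continuousOn.div continuousOn_id hy0).mul hf.continuousOn)
    have hcont2 : ContinuousOn G (uIcc ε 1) :=
      (hJc.continuousOn.div continuousOn_id hy0).pow 2
    have hint1 : IntervalIntegrable (fun y => 2 * (J y / y * f y)) volume ε 1 :=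
      hcont1.intervalIntegrable
    have hint2 : IntervalIntegrable G volume ε 1 := hcont2.intervalIntegrable
    have hftc : (∫ y in ε..1, 2 * (J y / y * f y)) - ∫ y in ε..1, G y
        = J 1 ^ 2 / 1 - J ε ^ 2 / ε := by
      rw [← intervalIntegral.integral_sub hint1 hint2]
      exact intervalIntegral.integral_eq_sub_of_hasDerivAt hderiv (hint1.sub hint2)
    have h2 : (∫ y in Ioc ε 1, G y) ≤ (∫ y in ε..1, 2 * (J y / y * f y)) + M ^ 2 * ε := by
      have hG_eq : (∫ y in Ioc ε 1, G y) = ∫ y in ε..1, G y :=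
        (intervalIntegral.integral_of_le hε1.le).symm
      have hJ1 : 0 ≤ J 1 ^ 2 / 1 := by positivity
      have hJε : J ε ^ 2 / ε ≤ M ^ 2 * ε := by
        rw [div_le_iff₀ hε0]
        have h3 := hJle ε hε0.le hε1.le
        have h4 := hJnn ε hε0.le
        nlinarith
      rw [hG_eq]; linarith
    have hcs : (∫ y in ε..1, 2 * (J y / y * f y)) ≤ 2 * Real.sqrt X * B := by
      rw [intervalIntegral.integral_of_le hε1.le, integral_const_mul]
      have hcs0 := cs2 (f := fun y => J y / y) (g := f) (s := Ioc ε 1) measurableSet_Ioc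
        (fun y hy => div_nonneg (hJnn y (hε0.trans hy.1).le) (hε0.trans hy.1).le)
        (fun y _ => hf0 y)
        ((hJc.continuousOn.div continuousOn_id fun x hx =>
          ne_of_gt (hε0.trans hx.1)).aestronglyMeasurable measurableSet_Ioc)
        hf.aestronglyMeasurable.restrict
        (Cf := M) (Cg := M)
        (fun y hy => by
          have hy2 : 0 ≤ J y / y := div_nonneg (hJnn y (hε0.trans hy.1).le) (hε0.trans hy.1).le
          rw [abs_of_nonneg hy2, div_le_iff₀ (hε0.trans hy.1)]
          exact hJle y (hε0.trans hy.1).le hy.2)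
        (fun y hy => by
          rw [abs_of_nonneg (hf0 y)]
          exact (le_abs_self _).trans (by
            simpa [Real.norm_eq_abs] using hM y ⟨(hε0.trans hy.1).le, hy.2⟩))
      have e1 : Real.sqrt (∫ y in Ioc ε 1, (J y / y) ^ 2) ≤ Real.sqrt X := by
        apply Real.sqrt_le_sqrt
        rw [integral_Ioc_eq_integral_Ioo, hXdef]
        exact setIntegral_mono_set (hGint.mono_set Ioo_subset_Ioc_self)
          (Filter.Eventually.of_forall fun y => hGnn y)
          (HasSubset.Subset.eventuallyLE (Ioo_subset_Ioo hε0.le le_rfl))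
      have e2 : Real.sqrt (∫ y in Ioc ε 1, f y ^ 2) ≤ B := by
        apply Real.sqrt_le_sqrt
        rw [integral_Ioc_eq_integral_Ioo]
        exact setIntegral_mono_set hfsq_int
          (Filter.Eventually.of_forall fun y => sq_nonneg _)
          (HasSubset.Subset.eventuallyLE (Ioo_subset_Ioo hε0.le le_rfl))
      calc 2 * ∫ y in Ioc ε 1, J y / y * f y
          ≤ 2 * (Real.sqrt (∫ y in Ioc ε 1, (J y / y) ^ 2) *
              Real.sqrt (∫ y in Ioc ε 1, f y ^ 2)) := by linarith
        _ ≤ 2 * (Real.sqrt X * B) := by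
            apply mul_le_mul_of_nonneg_left _ (by norm_num)
            exact mul_le_mul e1 e2 (Real.sqrt_nonneg _) (Real.sqrt_nonneg _)
        _ = 2 * Real.sqrt X * B := by ring
    nlinarith
  have hX2 : X ≤ 2 * Real.sqrt X * B := by
    apply le_of_forall_pos_le_add
    intro δ hδ
    set ε := min (1/2 : ℝ) (δ / (2 * (M ^ 2 + 1))) with hεdef
    have hε0 : 0 < ε := lt_min (by norm_num) (by positivity)
    have hε1 : ε < 1 := lt_of_le_of_lt (min_le_left _ _) (by norm_num)
    have h := key ε hε0 hε1
    have : 2 * (M ^ 2 + 1) * ε ≤ δ := by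
      have h1 : ε ≤ δ / (2 * (M ^ 2 + 1)) := min_le_right _ _
      have h2 : (0:ℝ) < 2 * (M ^ 2 + 1) := by positivity
      calc 2 * (M ^ 2 + 1) * ε ≤ 2 * (M ^ 2 + 1) * (δ / (2 * (M ^ 2 + 1))) := by
            exact mul_le_mul_of_nonneg_left h1 h2.le
        _ = δ := by field_simp
    linarith
  have hXX : Real.sqrt X * Real.sqrt X = X := Real.mul_self_sqrt hXnn
  have hBB : B * B = ∫ s in Ioo (0:ℝ) 1, f s ^ 2 := Real.mul_self_sqrt hfsq_nn
  nlinarith [sq_nonneg (Real.sqrt X - 2 * B), Real.sqrt_nonneg X]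

lemma abs_mul_le' {x z p q : ℝ} (hx : |x| ≤ p) (hz : |z| ≤ q) : |x * z| ≤ p * q := by
  rw [abs_mul]
  exact mul_le_mul hx hz (abs_nonneg _) (le_trans (abs_nonneg _) hx)

lemma ftc_bound {F F' : ℝ → ℝ} (hd : ∀ x, HasDerivAt F (F' x) x)
    (hc : Continuous F') {y c : ℝ} (hy : 0 ≤ y)
    (hb : ∀ s, 0 ≤ s → s ≤ y → |F' s| ≤ c) : |F y - F 0| ≤ c * y := by
  have heq := intervalIntegral.integral_eq_sub_of_hasDerivAt (f := F) (f' := F')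
      (a := 0) (b := y) (fun x _ => hd x) (hc.intervalIntegrable 0 y)
  rw [← heq]
  have hn := intervalIntegral.norm_integral_le_of_norm_le_const (a := 0) (b := y) (C := c)
    (f := F') (fun x hx => by
      rw [uIoc_of_le hy] at hx
      exact hb x hx.1.le hx.2)
  simpa [abs_of_nonneg hy] using hn

set_option maxHeartbeats 2000000 in
/-- Regularity of the quotient `g = φ / ū` near the degenerate point `y = 0`. -/
theorem stmt14 (m A : ℝ) (hm : 0 < m) (hA : 0 < A) :
    ∃ C > 0, ∀ (φ ub : ℝ → ℝ),
      ContDiff ℝ 3 φ → ContDiff ℝ 3 ub →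
      φ 0 = 0 → deriv φ 0 = 0 →
      ub 0 = 0 → 0 < deriv ub 0 → (∀ y : ℝ, 0 < y → 0 < ub y) →
      (∀ y : ℝ, 0 ≤ y →
        |ub y| ≤ A ∧ |deriv ub y| ≤ A ∧ |deriv (deriv ub) y| ≤ A ∧
          |deriv (deriv (deriv ub)) y| ≤ A) →
      (∀ y : ℝ, 0 ≤ y → m * min y 1 ≤ ub y) →
      -- the quotient extends with value `0` at `y = 0`
      (fun y => φ y / ub y) 0 = 0 ∧
      Real.sqrt (∫ y in Ioo (0:ℝ) 1, deriv (deriv (fun y' => φ y' / ub y')) y ^ 2)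
        ≤ C * (Real.sqrt (∫ y in Ioo (0:ℝ) 2, deriv (deriv (deriv φ)) y ^ 2)
          + Real.sqrt (∫ y in Ioo (0:ℝ) 2, deriv (deriv φ) y ^ 2)) := by
  refine ⟨100 * A ^ 2 / m ^ 3 + 1, by positivity, ?_⟩
  intro φ ub hφcd hubcd hφ0 hφ'0 hub0 hub'0 hubpos hbnd hlow
  set g : ℝ → ℝ := fun y' => φ y' / ub y' with hgdef
  set φ1 := deriv φ with hφ1def
  set φ2 := deriv φ1 with hφ2def
  set φ3 := deriv φ2 with hφ3def
  set u1 := deriv ub with hu1def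
  set u2 := deriv u1 with hu2def
  -- smoothness facts
  rw [show (3 : WithTop ℕ∞) = 2 + 1 from rfl, contDiff_succ_iff_deriv] at hφcd hubcd
  have hφd : Differentiable ℝ φ := hφcd.1
  have hφ1cd : ContDiff ℝ 2 φ1 := hφcd.2.2
  have hubd : Differentiable ℝ ub := hubcd.1
  have hu1cd : ContDiff ℝ 2 u1 := hubcd.2.2
  rw [show (2 : WithTop ℕ∞) = 1 + 1 from rfl, contDiff_succ_iff_deriv] at hφ1cd hu1cd
  have hφ1d : Differentiable ℝ φ1 := hφ1cd.1
  have hφ2cd : ContDiff ℝ 1 φ2 := hφ1cd.2.2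
  have hu1d : Differentiable ℝ u1 := hu1cd.1
  have hu2cd : ContDiff ℝ 1 u2 := hu1cd.2.2
  rw [contDiff_one_iff_deriv] at hφ2cd hu2cd
  have hφ2d : Differentiable ℝ φ2 := hφ2cd.1
  have hφ3c : Continuous φ3 := hφ2cd.2
  have hφ2c : Continuous φ2 := hφ2d.continuous
  have hφ1c : Continuous φ1 := hφ1d.continuous
  have hu1c : Continuous u1 := hu1d.continuous
  have hu2d : Differentiable ℝ u2 := hu2cd.1
  have hu2c : Continuous u2 := hu2d.continuous
  refine ⟨by show φ 0 / ub 0 = 0; rw [hub0, div_zero], ?_⟩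
  set a := φ2 0 with hadef
  set b := u1 0 with hbdef
  set Nfun : ℝ → ℝ := fun y =>
    φ2 y * (ub y * ub y) - 2 * (φ1 y * (u1 y * ub y)) - φ y * (u2 y * ub y)
      + 2 * (φ y * (u1 y * u1 y)) with hNfundef
  have hubne : ∀ z : ℝ, 0 < z → ub z ≠ 0 := fun z hz => ne_of_gt (hubpos z hz)
  -- second derivative formula
  have hg2 : ∀ y : ℝ, 0 < y → deriv (deriv g) y = Nfun y / (ub y) ^ 3 := by
    intro y hy
    have hd1 : ∀ z : ℝ, 0 < z →
        deriv g z = (φ1 z * ub z - φ z * u1 z) / (ub z) ^ 2 := fun z hz =>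
      deriv_div (hφd z) (hubd z) (hubne z hz)
    have hev : deriv g =ᶠ[nhds y]
        (fun z => (φ1 z * ub z - φ z * u1 z) / (ub z) ^ 2) := by
      filter_upwards [Ioi_mem_nhds hy] with z hz using hd1 z hz
    rw [Filter.EventuallyEq.deriv_eq hev]
    have hnum : HasDerivAt (fun z => φ1 z * ub z - φ z * u1 z)
        (φ2 y * ub y + φ1 y * u1 y - (φ1 y * u1 y + φ y * u2 y)) y :=
      ((hφ1d y).hasDerivAt.mul (hubd y).hasDerivAt).sub
        ((hφd y).hasDerivAt.mul (hu1d y).hasDerivAt)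
    have hden : HasDerivAt (fun z => (ub z) ^ 2) (2 * ub y ^ 1 * u1 y) y := by
      simpa using (hubd y).hasDerivAt.fun_pow 2
    have hdiv := hnum.fun_div hden (pow_ne_zero 2 (hubne y hy))
    rw [hdiv.deriv]
    have h0 := hubne y hy
    field_simp
    ring
  -- norms and remainder functions
  set P := ∫ y in Ioo (0:ℝ) 2, φ3 y ^ 2 with hPdef
  set Q := ∫ y in Ioo (0:ℝ) 2, φ2 y ^ 2 with hQdef
  set N := Real.sqrt P + Real.sqrt Q with hNdef
  set J : ℝ → ℝ := fun y => ∫ s in (0:ℝ)..y, |φ3 s| with hJdef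
  have hJapp : ∀ y, J y = ∫ s in (0:ℝ)..y, |φ3 s| := fun _ => rfl
  have hPnn : 0 ≤ P := setIntegral_nonneg measurableSet_Ioo fun y _ => sq_nonneg _
  have hQnn : 0 ≤ Q := setIntegral_nonneg measurableSet_Ioo fun y _ => sq_nonneg _
  have hNnn : 0 ≤ N := add_nonneg (Real.sqrt_nonneg _) (Real.sqrt_nonneg _)
  have hsPN : Real.sqrt P ≤ N := le_add_of_nonneg_right (Real.sqrt_nonneg _)
  have hJnn : ∀ y, 0 ≤ y → 0 ≤ J y := fun y hy =>
    intervalIntegral.integral_nonneg hy fun s _ => abs_nonneg _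
  have hJmono : ∀ s y : ℝ, 0 ≤ s → s ≤ y → J s ≤ J y := fun s y hs hsy =>
    intervalIntegral.integral_mono_interval le_rfl hs hsy
      (Filter.Eventually.of_forall fun x => abs_nonneg _)
      ((hφ3c.abs).intervalIntegrable 0 y)
  have hdφ : ∀ x, HasDerivAt φ (φ1 x) x := fun x => (hφd x).hasDerivAt
  have hdφ1 : ∀ x, HasDerivAt φ1 (φ2 x) x := fun x => (hφ1d x).hasDerivAt
  have hdφ2 : ∀ x, HasDerivAt φ2 (φ3 x) x := fun x => (hφ2d x).hasDerivAt
  have hdub : ∀ x, HasDerivAt ub (u1 x) x := fun x => (hubd x).hasDerivAt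
  have hdu1 : ∀ x, HasDerivAt u1 (u2 x) x := fun x => (hu1d x).hasDerivAt
  have hubA : ∀ y : ℝ, 0 ≤ y → |ub y| ≤ A := fun y hy => (hbnd y hy).1
  have hu1A : ∀ y : ℝ, 0 ≤ y → |u1 y| ≤ A := fun y hy => (hbnd y hy).2.1
  have hu2A : ∀ y : ℝ, 0 ≤ y → |u2 y| ≤ A := fun y hy => (hbnd y hy).2.2.1
  have hbA : |b| ≤ A := hu1A 0 le_rfl
  -- Taylor-type bounds
  have hI0 : ∀ y : ℝ, 0 ≤ y → |φ2 y - a| ≤ J y := by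
    intro y hy
    have heq := intervalIntegral.integral_eq_sub_of_hasDerivAt (f := φ2) (f' := φ3)
      (a := 0) (b := y) (fun x _ => hdφ2 x) (hφ3c.intervalIntegrable 0 y)
    rw [hadef, ← heq, hJapp]
    calc abs (∫ s in (0:ℝ)..y, φ3 s)
        ≤ abs (∫ s in (0:ℝ)..y, abs (φ3 s)) := by
          simpa [Real.norm_eq_abs] using
            intervalIntegral.norm_integral_le_abs_integral_norm
              (f := φ3) (a := 0) (b := y) (μ := volume)
      _ = ∫ s in (0:ℝ)..y, abs (φ3 s) := abs_of_nonneg (hJnn y hy)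
  have hI1 : ∀ y : ℝ, 0 ≤ y → |φ1 y - a * y| ≤ J y * y := by
    intro y hy
    have hF : ∀ x, HasDerivAt (fun z => φ1 z - a * z) (φ2 x - a) x := fun x => by
      simpa using (hdφ1 x).fun_sub ((hasDerivAt_id x).const_mul a)
    have := ftc_bound hF (hφ2c.sub continuous_const) hy
      (fun s hs0 hsy => (hI0 s hs0).trans (hJmono s y hs0 hsy))
    simpa [hφ'0] using this
  have hI2 : ∀ y : ℝ, 0 ≤ y → |φ y - a / 2 * y ^ 2| ≤ J y * y * y := by
    intro y hy
    have hF : ∀ x, HasDerivAt (fun z => φ z - a / 2 * z ^ 2) (φ1 x - a * x) x := fun x => by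
      have h := (hdφ x).fun_sub ((hasDerivAt_pow 2 x).const_mul (a / 2))
      refine h.congr_deriv ?_
      push_cast
      ring
    have hFc : Continuous (fun x => φ1 x - a * x) :=
      hφ1c.sub (continuous_const.mul continuous_id)
    have := ftc_bound hF hFc hy (c := J y * y) (fun s hs0 hsy => by
      have h1 := hI1 s hs0
      have h2 : J s * s ≤ J y * y :=
        mul_le_mul (hJmono s y hs0 hsy) hsy hs0 (hJnn y hy)
      linarith)
    simpa [hφ0] using this
  -- bounds on ub remainders
  have hS1 : ∀ y : ℝ, 0 ≤ y → |u1 y - b| ≤ A * y := by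
    intro y hy
    have := ftc_bound hdu1 hu2c hy (c := A) (fun s hs0 _ => hu2A s hs0)
    simpa [hbdef] using this
  have hT0 : ∀ y : ℝ, 0 ≤ y → |ub y - b * y| ≤ A * y * y := by
    intro y hy
    have hF : ∀ x, HasDerivAt (fun z => ub z - b * z) (u1 x - b) x := fun x => by
      simpa using (hdub x).fun_sub ((hasDerivAt_id x).const_mul b)
    have := ftc_bound hF (hu1c.sub continuous_const) hy (c := A * y)
      (fun s hs0 hsy => (hS1 s hs0).trans (mul_le_mul_of_nonneg_left hsy hA.le))
    simpa [hub0] using this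
  have hub2A : ∀ y : ℝ, 0 ≤ y → y ≤ 1 → |ub y| ≤ 2 * A * y := by
    intro y hy0 hy1
    have h1 := hT0 y hy0
    have h2 : |b * y| ≤ A * y := by
      rw [abs_mul, abs_of_nonneg hy0]
      exact mul_le_mul_of_nonneg_right hbA hy0
    have h3 : |ub y| ≤ |ub y - b * y| + |b * y| := by
      calc |ub y| = |(ub y - b * y) + b * y| := by ring_nf
        _ ≤ |ub y - b * y| + |b * y| := abs_add_le _ _
    have h4 : A * y * y ≤ A * y := by
      have : A * y * y ≤ A * y * 1 := mul_le_mul_of_nonneg_left hy1 (by positivity)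
      linarith
    linarith
  -- lower bound on b
  have hbm : m ≤ b := by
    have htend : Filter.Tendsto (slope ub 0) (nhdsWithin 0 (Ioi (0:ℝ))) (nhds b) :=
      (hasDerivAt_iff_tendsto_slope.mp (hdub 0)).mono_left
        (nhdsWithin_mono 0 (fun y (hy : y ∈ Ioi (0:ℝ)) => ne_of_gt hy))
    refine ge_of_tendsto htend ?_
    filter_upwards [Ioo_mem_nhdsGT_of_mem (Set.left_mem_Ico.mpr zero_lt_one)] with y hy
    have h1 : m * y ≤ ub y := by
      have := hlow y hy.1.le
      rwa [min_eq_left hy.2.le] at this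
    rw [slope_def_field, hub0, sub_zero, sub_zero]
    rw [le_div_iff₀ hy.1]
    linarith
  -- L¹–L² bounds on (0,2)
  obtain ⟨M2, hM2⟩ := isCompact_Icc.exists_bound_of_continuousOn
    (hφ2c.continuousOn (s := Icc (0:ℝ) 2))
  obtain ⟨M3, hM3⟩ := isCompact_Icc.exists_bound_of_continuousOn
    (hφ3c.continuousOn (s := Icc (0:ℝ) 2))
  have hone_sq : (∫ x in Ioo (0:ℝ) 2, (1:ℝ) ^ 2) = 2 := by
    simp [Real.volume_Ioo]
  have hcs_gen : ∀ (h : ℝ → ℝ), Continuous h → (∀ x ∈ Icc (0:ℝ) 2, ‖h x‖ ≤ max M2 M3) →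
      (∫ x in Ioo (0:ℝ) 2, |h x|) ≤
        Real.sqrt (∫ x in Ioo (0:ℝ) 2, h x ^ 2) * Real.sqrt 2 := by
    intro h hc hb
    have := cs2 (f := fun x => |h x|) (g := fun _ => (1:ℝ)) (s := Ioo (0:ℝ) 2)
      measurableSet_Ioo (fun x _ => abs_nonneg _) (fun x _ => zero_le_one)
      (hc.abs.aestronglyMeasurable.restrict) aestronglyMeasurable_const
      (Cf := max M2 M3) (Cg := 1)
      (fun x hx => by
        rw [abs_abs]
        simpa [Real.norm_eq_abs] using hb x (Ioo_subset_Icc_self hx))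
      (fun x _ => by norm_num)
    simp only [mul_one] at this
    calc (∫ x in Ioo (0:ℝ) 2, |h x|)
        ≤ Real.sqrt (∫ x in Ioo (0:ℝ) 2, |h x| ^ 2) * Real.sqrt (∫ x in Ioo (0:ℝ) 2, (1:ℝ) ^ 2) := this
      _ = Real.sqrt (∫ x in Ioo (0:ℝ) 2, h x ^ 2) * Real.sqrt 2 := by
          rw [hone_sq]
          congr 1
          apply congrArg
          exact setIntegral_congr_fun measurableSet_Ioo fun x _ => sq_abs _
  have hsqrt2 : Real.sqrt 2 ≤ 2 := by
    nlinarith [Real.sq_sqrt (show (0:ℝ) ≤ 2 by norm_num), Real.sqrt_nonneg 2]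
  have hJ2 : J 2 ≤ 2 * Real.sqrt P := by
    have h1 : J 2 = ∫ x in Ioo (0:ℝ) 2, |φ3 x| := by
      rw [hJapp, intervalIntegral.integral_of_le (by norm_num : (0:ℝ) ≤ 2),
        integral_Ioc_eq_integral_Ioo]
    have h2 := hcs_gen φ3 hφ3c (fun x hx => le_max_of_le_right (hM3 x hx))
    rw [h1]
    nlinarith [Real.sqrt_nonneg P, Real.sqrt_nonneg (∫ x in Ioo (0:ℝ) 2, φ3 x ^ 2)]
  have hφ2L1 : (∫ x in Ioo (0:ℝ) 2, |φ2 x|) ≤ 2 * Real.sqrt Q := by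
    have h2 := hcs_gen φ2 hφ2c (fun x hx => le_max_of_le_left (hM2 x hx))
    nlinarith [Real.sqrt_nonneg Q]
  -- bound |a| and sup of φ2
  have haN : |a| ≤ 2 * N := by
    have key : ∀ z ∈ Ioo (0:ℝ) 2, |a| - J 2 ≤ |φ2 z| := by
      intro z hz
      have h1 := hI0 z hz.1.le
      have h2 := hJmono z 2 hz.1.le hz.2.le
      have h3 : |a| - |φ2 z| ≤ |φ2 z - a| := by
        rw [abs_sub_comm]
        exact (abs_sub_abs_le_abs_sub a (φ2 z))
      linarith
    have hint2 : IntegrableOn (fun z => |φ2 z|) (Ioo 0 2) :=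
      ((hφ2c.abs.continuousOn).integrableOn_compact
        (isCompact_Icc (a := (0:ℝ)) (b := 2))).mono_set Ioo_subset_Icc_self
    have hmono := setIntegral_mono_on
      (integrableOn_const (by simp [Real.volume_Ioo])) hint2
      measurableSet_Ioo key
    rw [setIntegral_const, Real.volume_real_Ioo] at hmono
    have h4 : (2:ℝ) * (|a| - J 2) ≤ ∫ z in Ioo (0:ℝ) 2, |φ2 z| := by
      have he : (max (2 - 0) 0 : ℝ) = 2 := by
        norm_num
      rw [he, smul_eq_mul] at hmono
      exact hmono
    have h5 : Real.sqrt Q ≤ N := le_add_of_nonneg_left (Real.sqrt_nonneg _)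
    linarith [Real.sqrt_nonneg Q, Real.sqrt_nonneg P]
  have hφ2N : ∀ y : ℝ, 0 ≤ y → y ≤ 2 → |φ2 y| ≤ 4 * N := by
    intro y hy0 hy2
    have h1 := hI0 y hy0
    have h2 := hJmono y 2 hy0 hy2
    have h3 : |φ2 y| - |a| ≤ |φ2 y - a| := abs_sub_abs_le_abs_sub _ _
    linarith [hJ2, hsPN]
  have hφ1N : ∀ y : ℝ, 0 ≤ y → y ≤ 1 → |φ1 y| ≤ 4 * N * y := by
    intro y hy0 hy1
    have := ftc_bound hdφ1 hφ2c hy0 (c := 4 * N)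
      (fun s hs0 hsy => hφ2N s hs0 (by linarith))
    simpa [hφ'0] using this
  have hφN : ∀ y : ℝ, 0 ≤ y → y ≤ 1 → |φ y| ≤ 4 * N * y * y := by
    intro y hy0 hy1
    have := ftc_bound hdφ hφ1c hy0 (c := 4 * N * y)
      (fun s hs0 hsy => (hφ1N s hs0 (by linarith)).trans
        (mul_le_mul_of_nonneg_left hsy (by positivity)))
    simpa [hφ0] using this
  -- pointwise bound on Nfun
  have hNfb : ∀ y : ℝ, y ∈ Ioo (0:ℝ) 1 → |Nfun y| ≤ 10*A^2*(y^2*J y) + 30*A^2*(N*y^3) := by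
    intro y hy
    obtain ⟨y0', y1'⟩ := hy
    have hy0 := y0'.le
    have hy1 := y1'.le
    have hJy := hJnn y hy0
    have hubb := hub2A y hy0 hy1
    have hby : |b * y| ≤ A * y := by
      rw [abs_mul, abs_of_nonneg hy0]
      exact mul_le_mul_of_nonneg_right hbA hy0
    have h3Ay : |ub y + b*y| ≤ 2*A*y + A*y := (abs_add_le _ _).trans (add_le_add hubb hby)
    have hu1b2 : |u1 y + b| ≤ A + A := (abs_add_le _ _).trans (add_le_add (hu1A y hy0) hbA)
    have ha2 : |a/2| ≤ N := by
      rw [abs_div, abs_two]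
      linarith [haN]
    set w := (φ2 y - a)*(ub y*ub y) + a*((ub y - b*y)*(ub y + b*y)) with hwdef
    set x := (φ1 y - a*y)*(u1 y*ub y) + a*(y*((u1 y - b)*ub y + b*(ub y - b*y))) with hxdef
    set z := φ y*(u2 y*ub y) with hzdef
    set v := (φ y - a/2*y^2)*(u1 y*u1 y) + a/2*(y^2*((u1 y - b)*(u1 y + b))) with hvdef
    have ht1 : |w|
        ≤ J y*((2*A*y)*(2*A*y)) + (2*N)*((A*y*y)*(2*A*y + A*y)) :=
      (abs_add_le _ _).trans (add_le_add
        (abs_mul_le' (hI0 y hy0) (abs_mul_le' hubb hubb))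
        (abs_mul_le' haN (abs_mul_le' (hT0 y hy0) h3Ay)))
    have hinner : |(u1 y - b)*ub y + b*(ub y - b*y)| ≤ (A*y)*(2*A*y) + A*(A*y*y) :=
      (abs_add_le _ _).trans (add_le_add
        (abs_mul_le' (hS1 y hy0) hubb)
        (abs_mul_le' hbA (hT0 y hy0)))
    have ht2 : |x|
        ≤ (J y*y)*(A*(2*A*y)) + (2*N)*(y*((A*y)*(2*A*y) + A*(A*y*y))) :=
      (abs_add_le _ _).trans (add_le_add
        (abs_mul_le' (hI1 y hy0) (abs_mul_le' (hu1A y hy0) hubb))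
        (abs_mul_le' haN (abs_mul_le' (le_of_eq (abs_of_nonneg hy0)) hinner)))
    have ht3 : |z| ≤ (4*N*y*y)*(A*(2*A*y)) :=
      abs_mul_le' (hφN y hy0 hy1) (abs_mul_le' (hu2A y hy0) hubb)
    have ht4 : |v|
        ≤ (J y*y*y)*(A*A) + N*(y^2*((A*y)*(A + A))) :=
      (abs_add_le _ _).trans (add_le_add
        (abs_mul_le' (hI2 y hy0) (abs_mul_le' (hu1A y hy0) (hu1A y hy0)))
        (abs_mul_le' ha2 (abs_mul_le' (le_of_eq (abs_of_nonneg (sq_nonneg y)))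
          (abs_mul_le' (hS1 y hy0) hu1b2))))
    have hid : Nfun y = w - 2*x - z + 2*v := by
      rw [hwdef, hxdef, hzdef, hvdef]
      show φ2 y * (ub y * ub y) - 2 * (φ1 y * (u1 y * ub y)) - φ y * (u2 y * ub y)
          + 2 * (φ y * (u1 y * u1 y)) = _
      ring
    obtain ⟨hw1, hw2⟩ := abs_le.mp ht1
    obtain ⟨hx1, hx2⟩ := abs_le.mp ht2
    obtain ⟨hz1, hz2⟩ := abs_le.mp ht3
    obtain ⟨hv1, hv2⟩ := abs_le.mp ht4
    rw [hid, abs_le]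
    constructor
    · linarith
    · linarith
  -- pointwise second-derivative bound
  set c := 30*A^2/m^3 with hcdef
  have hcpos : 0 < c := by positivity
  have hptw : ∀ y ∈ Ioo (0:ℝ) 1, (Nfun y/(ub y)^3)^2 ≤ 2*c^2*((J y/y)^2 + N^2) := by
    intro y hy
    obtain ⟨y0', y1'⟩ := hy
    have hmy : m*y ≤ ub y := by
      have := hlow y y0'.le
      rwa [min_eq_left y1'.le] at this
    have hub3 : m^3*y^3 ≤ (ub y)^3 := by
      calc m^3*y^3 = (m*y)^3 := by ring
        _ ≤ (ub y)^3 := pow_le_pow_left₀ (by positivity) hmy 3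
    have hnum_nn : 0 ≤ 30*A^2*(y^2*J y + N*y^3) := by
      have h1 : 0 ≤ y^2*J y := mul_nonneg (sq_nonneg y) (hJnn y y0'.le)
      have h2 : 0 ≤ N*y^3 := mul_nonneg hNnn (by positivity)
      exact mul_nonneg (by positivity) (add_nonneg h1 h2)
    have habs : |Nfun y/(ub y)^3| ≤ c*(J y/y + N) := by
      rw [abs_div, abs_of_pos (pow_pos (hubpos y y0') 3)]
      have h1 : |Nfun y|/(ub y)^3 ≤ (30*A^2*(y^2*J y + N*y^3))/(m^3*y^3) := by
        apply div_le_div₀ hnum_nn _ (by positivity) hub3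
        have h3 : 0 ≤ A^2*(y^2*J y) :=
          mul_nonneg (sq_nonneg A) (mul_nonneg (sq_nonneg y) (hJnn y y0'.le))
        have h4 := hNfb y ⟨y0', y1'⟩
        linarith
      have h2 : (30*A^2*(y^2*J y + N*y^3))/(m^3*y^3) = c*(J y/y + N) := by
        rw [hcdef]
        field_simp
      rw [← h2]
      exact h1
    have hsq : (Nfun y/(ub y)^3)^2 = |Nfun y/(ub y)^3|^2 := (sq_abs _).symm
    have hb2 := pow_le_pow_left₀ (abs_nonneg (Nfun y/(ub y)^3)) habs 2
    have h5 : (c*(J y/y + N))^2 ≤ 2*c^2*((J y/y)^2 + N^2) := by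
      nlinarith only [sq_nonneg (J y/y - N), sq_nonneg c]
    rw [hsq]
    exact hb2.trans h5
  -- integrability facts
  obtain ⟨M1, hM1⟩ := isCompact_Icc.exists_bound_of_continuousOn
    (hφ3c.continuousOn (s := Icc (0:ℝ) 1))
  have hM1nn : 0 ≤ M1 := le_trans (norm_nonneg _) (hM1 0 ⟨le_rfl, zero_le_one⟩)
  have hJM1 : ∀ y ∈ Ioo (0:ℝ) 1, |J y/y| ≤ M1 := by
    intro y hy
    have h := intervalIntegral.norm_integral_le_of_norm_le_const (a := 0) (b := y) (C := M1)
      (f := fun s => |φ3 s|) (fun x hx => by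
        rw [uIoc_of_le hy.1.le] at hx
        simpa [Real.norm_eq_abs, abs_abs] using hM1 x ⟨hx.1.le, hx.2.trans hy.2.le⟩)
    have hJle : J y ≤ M1*y := by
      have h2 := (le_abs_self (J y)).trans (by
        simpa [hJapp, Real.norm_eq_abs, abs_of_nonneg hy.1.le] using h)
      linarith
    rw [abs_of_nonneg (div_nonneg (hJnn y hy.1.le) hy.1.le), div_le_iff₀ hy.1]
    linarith
  have hJcont : Continuous J := Differentiable.continuous fun y =>
    ((hφ3c.abs.integral_hasStrictDerivAt 0 y).hasDerivAt).differentiableAt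
  have hGm : AEStronglyMeasurable (fun y => (J y/y)^2) (volume.restrict (Ioo (0:ℝ) 1)) :=
    ((hJcont.continuousOn.div continuousOn_id fun x hx =>
      ne_of_gt hx.1).pow 2).aestronglyMeasurable measurableSet_Ioo
  have hGsq : ∀ y ∈ Ioo (0:ℝ) 1, (J y/y)^2 ≤ M1^2 := by
    intro y hy
    calc (J y/y)^2 = |J y/y|^2 := (sq_abs _).symm
      _ ≤ M1^2 := pow_le_pow_left₀ (abs_nonneg _) (hJM1 y hy) 2
  have hGint : IntegrableOn (fun y => (J y/y)^2) (Ioo 0 1) :=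
    integrableOn_of_bound measurableSet_Ioo hGm (c := M1^2) (fun y hy => by
      rw [abs_of_nonneg (sq_nonneg _)]
      exact hGsq y hy)
  have hconst_int : IntegrableOn (fun _ : ℝ => N^2) (Ioo (0:ℝ) 1) :=
    integrableOn_const (by simp [Real.volume_Ioo])
  have hmaj_int : IntegrableOn (fun y => 2*c^2*((J y/y)^2 + N^2)) (Ioo 0 1) :=
    (hGint.add hconst_int).const_mul _
  have hNfc : Continuous Nfun :=
    (((hφ2c.mul (hubd.continuous.mul hubd.continuous)).sub
      (continuous_const.mul (hφ1c.mul (hu1c.mul hubd.continuous)))).sub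
      (hφd.continuous.mul (hu2c.mul hubd.continuous))).add
      (continuous_const.mul (hφd.continuous.mul (hu1c.mul hu1c)))
  have hQm : AEStronglyMeasurable (fun y => (Nfun y/(ub y)^3)^2)
      (volume.restrict (Ioo (0:ℝ) 1)) := by
    apply ContinuousOn.aestronglyMeasurable _ measurableSet_Ioo
    apply ContinuousOn.pow
    exact ContinuousOn.div hNfc.continuousOn (hubd.continuous.pow 3).continuousOn
      (fun x hx => pow_ne_zero 3 (hubne x hx.1))
  have hQint : IntegrableOn (fun y => (Nfun y/(ub y)^3)^2) (Ioo 0 1) :=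
    integrableOn_of_bound measurableSet_Ioo hQm (c := 2*c^2*(M1^2 + N^2)) (fun y hy => by
      rw [abs_of_nonneg (sq_nonneg _)]
      have h1 := hptw y hy
      have h2 := hGsq y hy
      nlinarith [sq_nonneg c])
  have hEq : (∫ y in Ioo (0:ℝ) 1, deriv (deriv g) y^2)
      = ∫ y in Ioo (0:ℝ) 1, (Nfun y/(ub y)^3)^2 :=
    setIntegral_congr_fun measurableSet_Ioo (fun y hy => by rw [hg2 y hy.1])
  have hmono := setIntegral_mono_on hQint hmaj_int measurableSet_Ioo hptw
  have hXeq : (∫ y in Ioo (0:ℝ) 1, 2*c^2*((J y/y)^2 + N^2))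
      = 2*c^2*((∫ y in Ioo (0:ℝ) 1, (J y/y)^2) + N^2) := by
    rw [integral_const_mul, integral_add hGint hconst_int, setIntegral_const, Real.volume_real_Ioo]
    norm_num
  have hhardy := hardy (f := fun s => |φ3 s|) hφ3c.abs (fun x => abs_nonneg _)
  simp only [sq_abs] at hhardy
  have hhardy' : (∫ y in Ioo (0:ℝ) 1, (J y/y)^2) ≤ 4*∫ s in Ioo (0:ℝ) 1, φ3 s^2 := hhardy
  have hP01 : (∫ s in Ioo (0:ℝ) 1, φ3 s^2) ≤ P := by
    rw [hPdef]
    exact setIntegral_mono_set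
      (((hφ3c.pow 2).continuousOn.integrableOn_compact
        (isCompact_Icc (a := (0:ℝ)) (b := 2))).mono_set Ioo_subset_Icc_self)
      (Filter.Eventually.of_forall fun y => sq_nonneg _)
      (HasSubset.Subset.eventuallyLE (Ioo_subset_Ioo le_rfl (by norm_num)))
  have hPN2 : P ≤ N^2 := by
    nlinarith [Real.sq_sqrt hPnn, Real.sqrt_nonneg P, Real.sqrt_nonneg Q]
  have hfinal : (∫ y in Ioo (0:ℝ) 1, deriv (deriv g) y^2) ≤ 10*c^2*N^2 := by
    rw [hEq]
    calc (∫ y in Ioo (0:ℝ) 1, (Nfun y/(ub y)^3)^2)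
        ≤ ∫ y in Ioo (0:ℝ) 1, 2*c^2*((J y/y)^2 + N^2) := hmono
      _ = 2*c^2*((∫ y in Ioo (0:ℝ) 1, (J y/y)^2) + N^2) := hXeq
      _ ≤ 2*c^2*(4*N^2 + N^2) := by
          apply mul_le_mul_of_nonneg_left _ (by positivity)
          have h9 : (∫ y in Ioo (0:ℝ) 1, (J y/y)^2) ≤ 4*N^2 :=
            hhardy'.trans (mul_le_mul_of_nonneg_left (hP01.trans hPN2) (by norm_num))
          linarith [h9]
      _ = 10*c^2*N^2 := by ring
  have hCN : Real.sqrt (10*c^2*N^2) ≤ (100*A^2/m^3 + 1)*N := by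
    have ht : 0 ≤ A^2/m^3 := by positivity
    have key : ∀ t N' : ℝ, 0 ≤ t → 0 ≤ N' → 10*(30*t)^2*N'^2 ≤ ((100*t+1)*N')^2 := by
      intro t N' htt hN'
      nlinarith only [mul_nonneg (mul_nonneg htt htt) (sq_nonneg N'),
        mul_nonneg htt (sq_nonneg N'), sq_nonneg N']
    have h1 : 10*c^2*N^2 ≤ ((100*A^2/m^3 + 1)*N)^2 := by
      rw [hcdef]
      calc 10*(30*A^2/m^3)^2*N^2 = 10*(30*(A^2/m^3))^2*N^2 := by ring
        _ ≤ ((100*(A^2/m^3)+1)*N)^2 := key _ _ ht hNnn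
        _ = ((100*A^2/m^3 + 1)*N)^2 := by ring
    calc Real.sqrt (10*c^2*N^2) ≤ Real.sqrt (((100*A^2/m^3 + 1)*N)^2) := Real.sqrt_le_sqrt h1
      _ = (100*A^2/m^3 + 1)*N := Real.sqrt_sq (by positivity)
  calc Real.sqrt (∫ y in Ioo (0:ℝ) 1, deriv (deriv g) y^2)
      ≤ Real.sqrt (10*c^2*N^2) := Real.sqrt_le_sqrt hfinal
    _ ≤ (100*A^2/m^3 + 1)*N := hCN
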